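/- arXiv:1211.0327 — 2 statements merged into one kernel-verified Lean document; each statement's English description precedes it below -/
import Mathlib

section
/- For every real k ≥ 0, the Rutherford grazing-collision family b_ε satisfies the second grazing-collisions condition: lim_{ε → 0⁺} 2π ∫₀^π b_ε(cos θ) (1 − cos θ)^{2+k} sin θ dθ = lim_{ε → 0⁺} ∫_ε^π (16 ε / θ⁴)(1 − cos θ)^{2+k} dθ = 0. -/
open Real Filter

private lemma rsg_cont (k : ℝ) (hk : 0 ≤ k) :
    Continuous (fun θ : ℝ => (1 - Real.cos θ) ^ ((2 : ℝ) + k)) :=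
  (continuous_const.sub Real.continuous_cos).rpow_const
    (fun _ => Or.inr (by positivity))

private lemma rsg_key (k : ℝ) (hk : 0 ≤ k) {ε : ℝ} (hε : ε ∈ Set.Ioo 0 Real.pi) :
    0 ≤ (∫ θ in ε..Real.pi, 16 * ε / θ ^ 4 * (1 - Real.cos θ) ^ ((2 : ℝ) + k)) ∧
    (∫ θ in ε..Real.pi, 16 * ε / θ ^ 4 * (1 - Real.cos θ) ^ ((2 : ℝ) + k))
      ≤ (4 * (Real.pi ^ 2 / 2) ^ k * Real.pi) * ε := by
  obtain ⟨hε0, hεπ⟩ := hε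
  have hεπ' : ε ≤ Real.pi := hεπ.le
  set C : ℝ := 4 * (Real.pi ^ 2 / 2) ^ k with hC
  have hC0 : 0 ≤ C := by positivity
  -- nonnegativity of integrand
  have hnn : ∀ θ ∈ Set.Icc ε Real.pi,
      0 ≤ 16 * ε / θ ^ 4 * (1 - Real.cos θ) ^ ((2 : ℝ) + k) := by
    intro θ hθ
    have h1 : 0 ≤ 1 - Real.cos θ := by nlinarith [Real.cos_le_one θ]
    have h2 : (0:ℝ) < θ := lt_of_lt_of_le hε0 hθ.1
    positivity
  -- continuity / integrability
  have hcontOn : ContinuousOn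
      (fun θ : ℝ => 16 * ε / θ ^ 4 * (1 - Real.cos θ) ^ ((2 : ℝ) + k))
      (Set.uIcc ε Real.pi) := by
    rw [Set.uIcc_of_le hεπ']
    apply ContinuousOn.mul _ (rsg_cont k hk).continuousOn
    exact continuousOn_const.div (continuousOn_pow 4)
      (fun θ hθ => pow_ne_zero 4 (lt_of_lt_of_le hε0 hθ.1).ne')
  have hint : IntervalIntegrable
      (fun θ : ℝ => 16 * ε / θ ^ 4 * (1 - Real.cos θ) ^ ((2 : ℝ) + k))
      MeasureTheory.volume ε Real.pi := hcontOn.intervalIntegrable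
  constructor
  · exact intervalIntegral.integral_nonneg hεπ' hnn
  -- pointwise bound
  have hbd : ∀ θ ∈ Set.Icc ε Real.pi,
      16 * ε / θ ^ 4 * (1 - Real.cos θ) ^ ((2 : ℝ) + k) ≤ C * ε := by
    intro θ hθ
    have h2 : (0:ℝ) < θ := lt_of_lt_of_le hε0 hθ.1
    have h1 : 0 ≤ 1 - Real.cos θ := by nlinarith [Real.cos_le_one θ]
    have hle : 1 - Real.cos θ ≤ θ ^ 2 / 2 := by
      nlinarith [Real.one_sub_sq_div_two_le_cos (x := θ)]
    have h3 : (1 - Real.cos θ) ^ ((2:ℝ) + k) ≤ (θ ^ 2 / 2) ^ ((2:ℝ) + k) :=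
      Real.rpow_le_rpow h1 hle (by linarith)
    have h4 : (θ ^ 2 / 2) ^ ((2:ℝ) + k) = θ ^ 4 / 4 * (θ ^ 2 / 2) ^ k := by
      rw [Real.rpow_add (by positivity), Real.rpow_two]
      ring
    have h5 : (θ ^ 2 / 2) ^ k ≤ (Real.pi ^ 2 / 2) ^ k := by
      apply Real.rpow_le_rpow (by positivity) _ hk
      have := hθ.2
      nlinarith
    have h6 : 16 * ε / θ ^ 4 * (1 - Real.cos θ) ^ ((2:ℝ) + k)
        ≤ 16 * ε / θ ^ 4 * ((θ ^ 2 / 2) ^ ((2:ℝ) + k)) := by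
      apply mul_le_mul_of_nonneg_left h3 (by positivity)
    calc 16 * ε / θ ^ 4 * (1 - Real.cos θ) ^ ((2:ℝ) + k)
        ≤ 16 * ε / θ ^ 4 * (θ ^ 4 / 4 * (θ ^ 2 / 2) ^ k) := by rw [← h4]; exact h6
      _ = 4 * ε * (θ ^ 2 / 2) ^ k := by field_simp; ring
      _ ≤ 4 * ε * (Real.pi ^ 2 / 2) ^ k :=
          mul_le_mul_of_nonneg_left h5 (by positivity)
      _ = C * ε := by rw [hC]; ring
  have := intervalIntegral.integral_mono_on hεπ' hint intervalIntegrable_const hbd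
  calc (∫ θ in ε..Real.pi, 16 * ε / θ ^ 4 * (1 - Real.cos θ) ^ ((2 : ℝ) + k))
      ≤ ∫ _ in ε..Real.pi, C * ε := this
    _ = (Real.pi - ε) * (C * ε) := by
        rw [intervalIntegral.integral_const]; simp [smul_eq_mul]
    _ ≤ Real.pi * (C * ε) := by
        apply mul_le_mul_of_nonneg_right (by linarith) (by positivity)
    _ = (C * Real.pi) * ε := by ring

/-- The Rutherford grazing-collision family satisfies the second
grazing-collisions condition: higher moments vanish in the limit. -/
theorem rutherford_second_grazing_condition
    (w : ℝ → ℝ → ℝ)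
    (hw : ∀ ε θ : ℝ, w ε θ = if ε ≤ θ then 8 * ε / (Real.pi * θ ^ 4) else 0)
    (k : ℝ) (hk : 0 ≤ k) :
    Filter.Tendsto
        (fun ε : ℝ => ∫ θ in (0:ℝ)..Real.pi,
          2 * Real.pi * w ε θ * (1 - Real.cos θ) ^ ((2 : ℝ) + k))
        (nhdsWithin 0 (Set.Ioi 0)) (nhds 0) ∧
      Filter.Tendsto
        (fun ε : ℝ => ∫ θ in ε..Real.pi, 16 * ε / θ ^ 4 * (1 - Real.cos θ) ^ ((2 : ℝ) + k))
        (nhdsWithin 0 (Set.Ioi 0)) (nhds 0) := by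
  have hmem : Set.Ioo (0:ℝ) Real.pi ∈ nhdsWithin (0:ℝ) (Set.Ioi 0) :=
    Ioo_mem_nhdsGT_of_mem (by constructor <;> [rfl; exact Real.pi_pos]; )
  set C : ℝ := 4 * (Real.pi ^ 2 / 2) ^ k * Real.pi with hCdef
  have hC0 : 0 ≤ C := by positivity
  -- the second limit
  have h2 : Filter.Tendsto
      (fun ε : ℝ => ∫ θ in ε..Real.pi, 16 * ε / θ ^ 4 * (1 - Real.cos θ) ^ ((2 : ℝ) + k))
      (nhdsWithin 0 (Set.Ioi 0)) (nhds 0) := by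
    apply squeeze_zero' (t₀ := nhdsWithin 0 (Set.Ioi 0)) (g := fun ε => C * ε)
    · filter_upwards [hmem] with ε hε
      exact (rsg_key k hk hε).1
    · filter_upwards [hmem] with ε hε
      exact (rsg_key k hk hε).2
    · have : Filter.Tendsto (fun ε : ℝ => C * ε) (nhds 0) (nhds 0) := by
        simpa using (tendsto_id (x := nhds (0:ℝ))).const_mul C
      exact this.mono_left nhdsWithin_le_nhds
  refine ⟨?_, h2⟩
  -- the first function eventually equals the second
  apply h2.congr'
  filter_upwards [hmem] with ε hε
  obtain ⟨hε0, hεπ⟩ := hε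
  have hεπ' : ε ≤ Real.pi := hεπ.le
  have hπ : Real.pi ≠ 0 := Real.pi_ne_zero
  -- equality of integrands on [ε, π]
  have heq : Set.EqOn
      (fun θ : ℝ => 16 * ε / θ ^ 4 * (1 - Real.cos θ) ^ ((2 : ℝ) + k))
      (fun θ : ℝ => 2 * Real.pi * w ε θ * (1 - Real.cos θ) ^ ((2 : ℝ) + k))
      (Set.uIcc ε Real.pi) := by
    intro θ hθ
    rw [Set.uIcc_of_le hεπ'] at hθ
    simp only [hw, if_pos hθ.1]
    have hθ0 : θ ≠ 0 := (lt_of_lt_of_le hε0 hθ.1).ne'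
    field_simp
    ring
  have hcontOn : ContinuousOn
      (fun θ : ℝ => 16 * ε / θ ^ 4 * (1 - Real.cos θ) ^ ((2 : ℝ) + k))
      (Set.uIcc ε Real.pi) := by
    rw [Set.uIcc_of_le hεπ']
    apply ContinuousOn.mul _ (rsg_cont k hk).continuousOn
    exact continuousOn_const.div (continuousOn_pow 4)
      (fun θ hθ => pow_ne_zero 4 (lt_of_lt_of_le hε0 hθ.1).ne')
  have hint2 : IntervalIntegrable
      (fun θ : ℝ => 2 * Real.pi * w ε θ * (1 - Real.cos θ) ^ ((2 : ℝ) + k))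
      MeasureTheory.volume ε Real.pi := by
    apply hcontOn.intervalIntegrable.congr_ae
    exact MeasureTheory.ae_restrict_of_forall_mem measurableSet_uIoc
      (fun θ hθ => heq (Set.uIoc_subset_uIcc hθ))
  have hae0 : ∀ᵐ θ ∂(MeasureTheory.volume.restrict (Set.uIoc 0 ε)),
      (0:ℝ) = 2 * Real.pi * w ε θ * (1 - Real.cos θ) ^ ((2 : ℝ) + k) := by
    have hne : ∀ᵐ θ : ℝ ∂MeasureTheory.volume, θ ≠ ε := by
      rw [MeasureTheory.ae_iff]
      simpa using MeasureTheory.measure_singleton (μ := MeasureTheory.volume) ε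
    filter_upwards [MeasureTheory.ae_restrict_of_ae hne,
      MeasureTheory.ae_restrict_mem measurableSet_uIoc] with θ hθne hθmem
    rw [Set.uIoc_of_le hε0.le] at hθmem
    have : ¬ ε ≤ θ := fun h => hθne (le_antisymm hθmem.2 h)
    simp [hw, this]
  have hint1 : IntervalIntegrable
      (fun θ : ℝ => 2 * Real.pi * w ε θ * (1 - Real.cos θ) ^ ((2 : ℝ) + k))
      MeasureTheory.volume 0 ε :=
    (intervalIntegrable_const (c := (0:ℝ))).congr_ae hae0
  show (∫ θ in ε..Real.pi, 16 * ε / θ ^ 4 * (1 - Real.cos θ) ^ ((2 : ℝ) + k))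
      = ∫ θ in (0:ℝ)..Real.pi, 2 * Real.pi * w ε θ * (1 - Real.cos θ) ^ ((2 : ℝ) + k)
  rw [← intervalIntegral.integral_add_adjacent_intervals hint1 hint2]
  have hz : (∫ θ in (0:ℝ)..ε, 2 * Real.pi * w ε θ * (1 - Real.cos θ) ^ ((2 : ℝ) + k)) = 0 := by
    have hne : ∀ᵐ θ : ℝ ∂MeasureTheory.volume, θ ≠ ε := by
      rw [MeasureTheory.ae_iff]
      simpa using MeasureTheory.measure_singleton (μ := MeasureTheory.volume) ε
    have hcon : (∫ θ in (0:ℝ)..ε, 2 * Real.pi * w ε θ * (1 - Real.cos θ) ^ ((2 : ℝ) + k))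
        = ∫ _ in (0:ℝ)..ε, (0:ℝ) := by
      apply intervalIntegral.integral_congr_ae
      filter_upwards [hne] with θ hθne hθmem
      rw [Set.uIoc_of_le hε0.le] at hθmem
      have : ¬ ε ≤ θ := fun h => hθne (le_antisymm hθmem.2 h)
      simp [hw, this]
    simpa using hcon
  rw [hz, zero_add]
  exact intervalIntegral.integral_congr heq
end

section
/- The Rutherford grazing-collision family concentrates at θ = 0 as a delta family: for every continuous function g : [0, π] → ℝ, lim_{ε → 0⁺} ∫₀^π 2π b_ε(cos θ) sin θ (1 − cos θ) g(θ) dθ = lim_{ε → 0⁺} ∫_ε^π (16 ε / θ⁴)(1 − cos θ) g(θ) dθ = 8 g(0); that is, 2π sin θ (1 − cos θ) b_ε(cos θ) converges weakly to Λ₀ δ_{θ=0} with Λ₀ = 8. -/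
open Real Filter

open Set MeasureTheory


lemma tendsto_sin_div : Tendsto (fun x : ℝ => Real.sin x / x) (nhdsWithin 0 {(0:ℝ)}ᶜ) (nhds 1) := by
  have h := Real.hasDerivAt_sin 0
  rw [hasDerivAt_iff_tendsto_slope] at h
  simp only [Real.cos_zero] at h
  refine h.congr' ?_
  filter_upwards [eventually_mem_nhdsWithin] with x hx
  simp [slope_def_field, Real.sin_zero]

lemma one_sub_cos_eq (x : ℝ) : 1 - Real.cos x = 2 * Real.sin (x/2) ^ 2 := by
  have h1 : Real.cos (2 * (x/2)) = 2 * Real.cos (x/2) ^ 2 - 1 := Real.cos_two_mul _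
  have h2 := Real.sin_sq_add_cos_sq (x/2)
  have : (2:ℝ) * (x/2) = x := by ring
  rw [this] at h1
  nlinarith

lemma one_sub_cos_le (x : ℝ) : 1 - Real.cos x ≤ x ^ 2 / 2 := by
  rw [one_sub_cos_eq]
  have := Real.sin_sq_le_sq (x := x/2)
  nlinarith

lemma tendsto_one_sub_cos_div_sq :
    Tendsto (fun x : ℝ => (1 - Real.cos x) / x ^ 2) (nhdsWithin 0 {(0:ℝ)}ᶜ) (nhds (1/2)) := by
  have h2 : Tendsto (fun x : ℝ => x / 2) (nhdsWithin 0 {(0:ℝ)}ᶜ) (nhdsWithin 0 {(0:ℝ)}ᶜ) := by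
    apply tendsto_nhdsWithin_of_tendsto_nhds_of_eventually_within
    · exact tendsto_nhdsWithin_of_tendsto_nhds (by simpa using (continuous_id.div_const (2:ℝ)).tendsto 0)
    · filter_upwards [eventually_mem_nhdsWithin] with x hx
      simp only [Set.mem_compl_iff, Set.mem_singleton_iff] at hx ⊢
      intro h; apply hx; linarith
  have hT : Tendsto (fun x : ℝ => (Real.sin (x/2) / (x/2)) ^ 2 * (1/2))
      (nhdsWithin 0 {(0:ℝ)}ᶜ) (nhds (1 ^ 2 * (1/2))) :=
    ((tendsto_sin_div.comp h2).pow 2).mul_const _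
  norm_num at hT
  refine hT.congr' ?_
  filter_upwards [eventually_mem_nhdsWithin] with x hx
  simp only [Set.mem_compl_iff, Set.mem_singleton_iff] at hx
  rw [one_sub_cos_eq]
  field_simp

lemma rutherford_main (g : ℝ → ℝ) (hg : ContinuousOn g (Set.Icc 0 Real.pi)) :
    Tendsto (fun ε : ℝ => ∫ θ in ε..Real.pi, 16 * ε / θ ^ 4 * (1 - Real.cos θ) * g θ)
      (nhdsWithin 0 (Set.Ioi 0)) (nhds (8 * g 0)) := by
  obtain ⟨M, hM⟩ := isCompact_Icc.exists_bound_of_continuousOn hg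
  have hM0 : 0 ≤ M := le_trans (norm_nonneg (g 0)) (hM 0 ⟨le_refl 0, Real.pi_pos.le⟩)
  set μ := volume.restrict (Set.Ioi (1:ℝ)) with hμ
  set F : ℝ → ℝ → ℝ := fun ε t =>
    (Set.Ioc 1 (Real.pi / ε)).indicator
      (fun t => 16 / (ε ^ 2 * t ^ 4) * (1 - Real.cos (ε * t)) * g (ε * t)) t with hF
  have hmem : Set.Ioo (0:ℝ) Real.pi ∈ nhdsWithin 0 (Set.Ioi 0) :=
    Ioo_mem_nhdsGT_of_mem ⟨le_refl 0, Real.pi_pos⟩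
  -- Step 1: limit of ∫ F ε ∂μ
  have key : Tendsto (fun ε : ℝ => ∫ t, F ε t ∂μ) (nhdsWithin 0 (Set.Ioi 0))
      (nhds (∫ t, 8 * g 0 / t ^ 2 ∂μ)) := by
    apply tendsto_integral_filter_of_dominated_convergence (bound := fun t => 8 * M / t ^ 2)
    · -- measurability
      filter_upwards [hmem] with ε hε
      have hε0 : (0:ℝ) < ε := hε.1
      simp only [hF]
      rw [aestronglyMeasurable_indicator_iff measurableSet_Ioc, hμ,
        Measure.restrict_restrict measurableSet_Ioc,
        Set.inter_eq_self_of_subset_left Set.Ioc_subset_Ioi_self]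
      apply ContinuousOn.aestronglyMeasurable _ measurableSet_Ioc
      have c1 : ContinuousOn (fun t : ℝ => 16 / (ε ^ 2 * t ^ 4)) (Set.Ioc 1 (Real.pi / ε)) := by
        apply continuousOn_const.div (by fun_prop)
        intro t ht
        have : (0:ℝ) < t := lt_trans one_pos ht.1
        positivity
      have c2 : ContinuousOn (fun t : ℝ => 1 - Real.cos (ε * t)) (Set.Ioc 1 (Real.pi / ε)) := by
        fun_prop
      have c3 : ContinuousOn (fun t : ℝ => g (ε * t)) (Set.Ioc 1 (Real.pi / ε)) := by
        apply hg.comp (continuous_mul_left ε).continuousOn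
        intro t ht
        have ht1 : (0:ℝ) < t := lt_trans one_pos ht.1
        refine ⟨by positivity, ?_⟩
        simpa [mul_comm] using (le_div_iff₀ hε0).mp ht.2
      exact (c1.mul c2).mul c3
    · -- bound
      filter_upwards [hmem] with ε hε
      have hε0 : (0:ℝ) < ε := hε.1
      filter_upwards [ae_restrict_mem measurableSet_Ioi] with t ht
      have ht1 : (1:ℝ) < t := ht
      have ht0 : (0:ℝ) < t := lt_trans one_pos ht1
      simp only [hF]
      by_cases hmem' : t ∈ Set.Ioc 1 (Real.pi / ε)
      · rw [Set.indicator_of_mem hmem']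
        have hεt : ε * t ∈ Set.Icc 0 Real.pi := by
          refine ⟨by positivity, ?_⟩
          rw [mul_comm]
          exact (le_div_iff₀ hε0).mp hmem'.2
        have h1 : ‖(16 / (ε ^ 2 * t ^ 4) * (1 - Real.cos (ε * t)) * g (ε * t))‖
            ≤ 16 / (ε ^ 2 * t ^ 4) * ((ε * t) ^ 2 / 2) * M := by
          rw [norm_mul, norm_mul]
          have ha : ‖(16:ℝ) / (ε ^ 2 * t ^ 4)‖ = 16 / (ε ^ 2 * t ^ 4) := by
            rw [Real.norm_eq_abs, abs_of_nonneg (by positivity)]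
          rw [ha]
          apply mul_le_mul
          · apply mul_le_mul_of_nonneg_left _ (by positivity)
            rw [Real.norm_eq_abs, abs_of_nonneg (by nlinarith [Real.cos_le_one (ε * t)])]
            exact one_sub_cos_le _
          · exact hM _ hεt
          · exact norm_nonneg _
          · positivity
        refine h1.trans (le_of_eq ?_)
        have hεne := hε0.ne'
        have htne := ht0.ne'
        field_simp
        ring
      · rw [Set.indicator_of_notMem hmem']
        simp only [norm_zero]
        positivity
    · -- integrable bound
      have : IntegrableOn (fun t : ℝ => 8 * M * t ^ (-2:ℝ)) (Set.Ioi 1) :=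
        (integrableOn_Ioi_rpow_of_lt (by norm_num) one_pos).const_mul _
      refine this.congr_fun (fun t ht => ?_) measurableSet_Ioi
      have ht0 : (0:ℝ) < t := lt_trans one_pos ht
      beta_reduce
      rw [Real.rpow_neg ht0.le, show ((2:ℝ)) = ((2:ℕ):ℝ) by norm_num, Real.rpow_natCast,
        div_eq_mul_inv]
    · -- pointwise limit
      filter_upwards [ae_restrict_mem measurableSet_Ioi] with t ht
      have ht1 : (1:ℝ) < t := ht
      have ht0 : (0:ℝ) < t := lt_trans one_pos ht1
      have hmem2 : Set.Ioo (0:ℝ) (Real.pi / t) ∈ nhdsWithin 0 (Set.Ioi 0) :=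
        Ioo_mem_nhdsGT_of_mem ⟨le_refl 0, by positivity⟩
      have hεt : Tendsto (fun ε : ℝ => ε * t) (nhdsWithin 0 (Set.Ioi 0))
          (nhdsWithin 0 {(0:ℝ)}ᶜ) := by
        apply tendsto_nhdsWithin_of_tendsto_nhds_of_eventually_within
        · apply tendsto_nhdsWithin_of_tendsto_nhds
          simpa using (continuous_mul_right t).tendsto (0:ℝ)
        · filter_upwards [eventually_mem_nhdsWithin] with ε (hε : ε ∈ Set.Ioi (0:ℝ))
          simp only [Set.mem_compl_iff, Set.mem_singleton_iff]
          exact (mul_pos hε ht0).ne'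
      have hεt2 : Tendsto (fun ε : ℝ => ε * t) (nhdsWithin 0 (Set.Ioi 0))
          (nhdsWithin 0 (Set.Icc 0 Real.pi)) := by
        apply tendsto_nhdsWithin_of_tendsto_nhds_of_eventually_within
        · apply tendsto_nhdsWithin_of_tendsto_nhds
          simpa using (continuous_mul_right t).tendsto (0:ℝ)
        · filter_upwards [hmem2] with ε hε
          exact ⟨(mul_pos hε.1 ht0).le, (le_div_iff₀ ht0).mp hε.2.le⟩
      have T1 : Tendsto (fun ε : ℝ => (1 - Real.cos (ε * t)) / (ε * t) ^ 2)
          (nhdsWithin 0 (Set.Ioi 0)) (nhds (1/2)) := tendsto_one_sub_cos_div_sq.comp hεt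
      have T2 : Tendsto (fun ε : ℝ => g (ε * t)) (nhdsWithin 0 (Set.Ioi 0)) (nhds (g 0)) :=
        (hg 0 ⟨le_refl 0, Real.pi_pos.le⟩).tendsto.comp hεt2
      have T : Tendsto (fun ε : ℝ => 16 / t ^ 2 * ((1 - Real.cos (ε * t)) / (ε * t) ^ 2) * g (ε * t))
          (nhdsWithin 0 (Set.Ioi 0)) (nhds (16 / t ^ 2 * (1/2) * g 0)) :=
        (tendsto_const_nhds.mul T1).mul T2
      have heq : (16:ℝ) / t ^ 2 * (1/2) * g 0 = 8 * g 0 / t ^ 2 := by ring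
      rw [heq] at T
      refine T.congr' ?_
      filter_upwards [hmem2] with ε hε
      have hε0 : (0:ℝ) < ε := hε.1
      have hmem' : t ∈ Set.Ioc 1 (Real.pi / ε) := by
        refine ⟨ht1, ?_⟩
        rw [le_div_iff₀ hε0, mul_comm]
        exact (lt_div_iff₀ ht0).mp hε.2 |>.le
      simp only [hF]
      rw [Set.indicator_of_mem hmem']
      have hεne := hε0.ne'
      have htne := ht0.ne'
      ring
  -- Step 2: ∫ 8 g 0 / t² ∂μ = 8 g 0
  have hI : (∫ t, 8 * g 0 / t ^ 2 ∂μ) = 8 * g 0 := by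
    have h1 : (∫ t in Set.Ioi (1:ℝ), 8 * g 0 * t ^ (-2:ℝ)) = 8 * g 0 := by
      rw [MeasureTheory.integral_const_mul, integral_Ioi_rpow_of_lt (by norm_num) one_pos]
      norm_num
    have h2 : (∫ t, 8 * g 0 / t ^ 2 ∂μ) = ∫ t in Set.Ioi (1:ℝ), 8 * g 0 * t ^ (-2:ℝ) := by
      rw [hμ]
      apply setIntegral_congr_fun measurableSet_Ioi
      intro t ht
      have ht0 : (0:ℝ) < t := lt_trans one_pos ht
      show 8 * g 0 / t ^ 2 = 8 * g 0 * t ^ (-2:ℝ)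
      rw [Real.rpow_neg ht0.le, show ((2:ℝ)) = ((2:ℕ):ℝ) by norm_num, Real.rpow_natCast,
        div_eq_mul_inv]
    rw [h2, h1]
  rw [hI] at key
  -- Step 3: eventual equality of the two expressions
  refine key.congr' ?_
  filter_upwards [hmem] with ε hε
  have hε0 : (0:ℝ) < ε := hε.1
  have hεπ : ε < Real.pi := hε.2
  have h1 : (1:ℝ) ≤ Real.pi / ε := ((one_lt_div hε0).mpr hεπ).le
  have hsub : (∫ x in (1:ℝ)..(Real.pi/ε),
        (fun θ => 16 * ε / θ ^ 4 * (1 - Real.cos θ) * g θ) (ε * x))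
      = ε⁻¹ • ∫ θ in (ε * 1)..(ε * (Real.pi / ε)), 16 * ε / θ ^ 4 * (1 - Real.cos θ) * g θ :=
    intervalIntegral.integral_comp_mul_left
      (fun θ => 16 * ε / θ ^ 4 * (1 - Real.cos θ) * g θ) hε0.ne'
  rw [mul_one, mul_div_cancel₀ _ hε0.ne'] at hsub
  have hpt : ∀ x : ℝ, ε * (16 * ε / (ε * x) ^ 4 * (1 - Real.cos (ε * x)) * g (ε * x))
      = 16 / (ε ^ 2 * x ^ 4) * (1 - Real.cos (ε * x)) * g (ε * x) := by
    intro x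
    rcases eq_or_ne x 0 with h | h
    · simp [h]
    · have hεne := hε0.ne'
      field_simp
  have step1 : (∫ t, F ε t ∂μ)
      = ∫ t in (1:ℝ)..(Real.pi/ε), 16 / (ε ^ 2 * t ^ 4) * (1 - Real.cos (ε * t)) * g (ε * t) := by
    simp only [hF, hμ]
    rw [MeasureTheory.integral_indicator measurableSet_Ioc,
      Measure.restrict_restrict measurableSet_Ioc,
      Set.inter_eq_self_of_subset_left Set.Ioc_subset_Ioi_self,
      intervalIntegral.integral_of_le h1]
  have step2 : (∫ t in (1:ℝ)..(Real.pi/ε),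
        16 / (ε ^ 2 * t ^ 4) * (1 - Real.cos (ε * t)) * g (ε * t))
      = ∫ θ in ε..Real.pi, 16 * ε / θ ^ 4 * (1 - Real.cos θ) * g θ := by
    have e1 : (∫ t in (1:ℝ)..(Real.pi/ε),
          16 / (ε ^ 2 * t ^ 4) * (1 - Real.cos (ε * t)) * g (ε * t))
        = ∫ x in (1:ℝ)..(Real.pi/ε),
          ε * (16 * ε / (ε * x) ^ 4 * (1 - Real.cos (ε * x)) * g (ε * x)) :=
      intervalIntegral.integral_congr (fun x _ => (hpt x).symm)
    rw [e1, intervalIntegral.integral_const_mul, hsub, smul_eq_mul, ← mul_assoc,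
      mul_inv_cancel₀ hε0.ne', one_mul]
  exact step1.trans step2

/-- The Rutherford grazing-collision family concentrates at `θ = 0`
as a delta family with weight `Λ₀ = 8`. -/
theorem rutherford_delta_family
    (w : ℝ → ℝ → ℝ)
    (hw : ∀ ε θ : ℝ, w ε θ = if ε ≤ θ then 8 * ε / (Real.pi * θ ^ 4) else 0)
    (g : ℝ → ℝ) (hg : ContinuousOn g (Set.Icc 0 Real.pi)) :
    Filter.Tendsto
        (fun ε : ℝ => ∫ θ in (0:ℝ)..Real.pi, 2 * Real.pi * w ε θ * (1 - Real.cos θ) * g θ)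
        (nhdsWithin 0 (Set.Ioi 0)) (nhds (8 * g 0)) ∧
      Filter.Tendsto
        (fun ε : ℝ => ∫ θ in ε..Real.pi, 16 * ε / θ ^ 4 * (1 - Real.cos θ) * g θ)
        (nhdsWithin 0 (Set.Ioi 0)) (nhds (8 * g 0)) := by
  have main := rutherford_main g hg
  refine ⟨?_, main⟩
  refine main.congr' ?_
  filter_upwards [Ioo_mem_nhdsGT_of_mem ⟨le_refl (0:ℝ), Real.pi_pos⟩] with ε hε
  have hε0 : (0:ℝ) < ε := hε.1
  have hεπ : ε < Real.pi := hε.2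
  have hint : ∀ θ : ℝ, 2 * Real.pi * w ε θ * (1 - Real.cos θ) * g θ
      = (Set.Ici ε).indicator (fun θ => 16 * ε / θ ^ 4 * (1 - Real.cos θ) * g θ) θ := by
    intro θ
    rw [hw]
    by_cases h : ε ≤ θ
    · rw [if_pos h, Set.indicator_of_mem (show θ ∈ Set.Ici ε from h)]
      have hθ : (0:ℝ) < θ := lt_of_lt_of_le hε0 h
      have hπ := Real.pi_pos.ne'
      have hθne := hθ.ne'
      field_simp
      ring
    · rw [if_neg h, Set.indicator_of_notMem (show θ ∉ Set.Ici ε from h)]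
      ring
  have hset : Set.Ici ε ∩ Set.Ioc 0 Real.pi = Set.Icc ε Real.pi := by
    ext x
    simp only [Set.mem_inter_iff, Set.mem_Ici, Set.mem_Ioc, Set.mem_Icc]
    constructor
    · rintro ⟨h1, _, h3⟩; exact ⟨h1, h3⟩
    · rintro ⟨h1, h2⟩; exact ⟨h1, lt_of_lt_of_le hε0 h1, h2⟩
  calc (∫ θ in ε..Real.pi, 16 * ε / θ ^ 4 * (1 - Real.cos θ) * g θ)
      = ∫ θ in Set.Ioc ε Real.pi, 16 * ε / θ ^ 4 * (1 - Real.cos θ) * g θ :=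
        intervalIntegral.integral_of_le hεπ.le
    _ = ∫ θ in Set.Icc ε Real.pi, 16 * ε / θ ^ 4 * (1 - Real.cos θ) * g θ :=
        (MeasureTheory.integral_Icc_eq_integral_Ioc).symm
    _ = ∫ θ in Set.Ioc 0 Real.pi,
          (Set.Ici ε).indicator (fun θ => 16 * ε / θ ^ 4 * (1 - Real.cos θ) * g θ) θ := by
        rw [MeasureTheory.integral_indicator measurableSet_Ici,
          Measure.restrict_restrict measurableSet_Ici, hset]
    _ = ∫ θ in Set.Ioc 0 Real.pi, 2 * Real.pi * w ε θ * (1 - Real.cos θ) * g θ :=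
        setIntegral_congr_fun measurableSet_Ioc (fun θ _ => (hint θ).symm)
    _ = ∫ θ in (0:ℝ)..Real.pi, 2 * Real.pi * w ε θ * (1 - Real.cos θ) * g θ :=
        (intervalIntegral.integral_of_le Real.pi_pos.le).symm
end
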